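/- Let K ≥ 2, μ, ν ∈ [0,1], π ∈ ℝ^K a probability vector with nonnegative entries, and for 2 ≤ k ≤ K−2 define G_k = ∑_{i=k+1}^{K−1} π_{i+1}·ν^k/((i−k)(i−k+1)) − π_i·μ·ν^{k−1}/((i−k)(i−k+1)) (the sum of all degree-k terms of the MRR gain; indices as in the paper's grouping). If μ·π_i ≤ ν·π_{i+1} for all 1 ≤ i ≤ K−1, then G_k ≥ 0. -/

import Mathlib

/-- The degree-`k` homogeneous part `G_k` of the expected-MRR gain is nonnegative under
the ratio condition `μ·πᵢ ≤ ν·πᵢ₊₁`. -/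
theorem degree_k_gain_nonneg (K k : ℕ) (hk : 2 ≤ k) (hkK : k ≤ K - 2) (hK : 2 ≤ K)
    (μ ν : ℝ) (hμ : μ ∈ Set.Icc (0:ℝ) 1) (hν : ν ∈ Set.Icc (0:ℝ) 1)
    (π : ℕ → ℝ) (hnn : ∀ i ∈ Finset.Icc 1 K, 0 ≤ π i)
    (hsum : ∑ i ∈ Finset.Icc 1 K, π i = 1)
    (hcond : ∀ i, 1 ≤ i → i ≤ K - 1 → μ * π i ≤ ν * π (i + 1)) :
    0 ≤ ∑ i ∈ Finset.Icc (k + 1) (K - 1),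
        (π (i + 1) * ν ^ k / (((i - k) * (i - k + 1) : ℕ) : ℝ)
          - π i * μ * ν ^ (k - 1) / (((i - k) * (i - k + 1) : ℕ) : ℝ)) := by
  apply Finset.sum_nonneg
  intro i hi
  rw [Finset.mem_Icc] at hi
  have h1 : 1 ≤ i := le_trans (by omega) hi.1
  have hcd : μ * π i ≤ ν * π (i + 1) := hcond i h1 hi.2
  rw [sub_nonneg, div_le_div_iff_of_pos_right]
  · have hk1 : k = (k - 1) + 1 := by omega
    have hν0 : (0:ℝ) ≤ ν := hν.1
    calc π i * μ * ν ^ (k - 1) = ν ^ (k - 1) * (μ * π i) := by ring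
      _ ≤ ν ^ (k - 1) * (ν * π (i + 1)) := by
          exact mul_le_mul_of_nonneg_left hcd (pow_nonneg hν0 _)
      _ = π (i + 1) * ν ^ k := by
          rw [show ν ^ k = ν ^ (k-1) * ν from by conv_lhs => rw [hk1, pow_succ]]; ring
  · have : 1 ≤ i - k := by omega
    positivity
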